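/- arXiv:2208.05691 — 2 statements merged into one kernel-verified Lean document; each statement's English description precedes it below -/
import Mathlib

section
/- Let c > 0, K > 0, and let Ω, a₁, a₂, b₁, b₂ be real numbers. Then ∫_{b₁}^{b₂} ∫_{a₁}^{a₂} [c² + (a + K·b − Ω)²]^{−3/2} da db = (1/(K·c²)) · [ √(c² + (a₂ + K·b₂ − Ω)²) − √(c² + (a₁ + K·b₂ − Ω)²) − √(c² + (a₂ + K·b₁ − Ω)²) + √(c² + (a₁ + K·b₁ − Ω)²) ]. -/
open Real

lemma rpow_neg32 (c q : ℝ) (hq : 0 < q) :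
    q ^ (-(3:ℝ)/2) = 1 / (q * Real.sqrt q) := by
  rw [show (-(3:ℝ)/2) = -(1 + 1/2) by norm_num, Real.rpow_neg hq.le,
    Real.rpow_add hq, Real.rpow_one, ← Real.sqrt_eq_rpow]
  rw [inv_eq_one_div]

lemma hasDerivAt_F (c : ℝ) (hc : 0 < c) (x : ℝ) :
    HasDerivAt (fun x => x / (c^2 * Real.sqrt (c^2 + x^2)))
      ((c^2 + x^2) ^ (-(3:ℝ)/2)) x := by
  have hq : 0 < c^2 + x^2 := by positivity
  have hs : 0 < Real.sqrt (c^2 + x^2) := Real.sqrt_pos.2 hq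
  have h1 : HasDerivAt (fun x : ℝ => c^2 + x^2) (2*x) x := by
    simpa using ((hasDerivAt_pow 2 x).const_add (c^2))
  have h2 : HasDerivAt (fun x : ℝ => Real.sqrt (c^2 + x^2))
      (2*x / (2 * Real.sqrt (c^2 + x^2))) x :=
    (Real.hasDerivAt_sqrt hq.ne').comp x h1 |>.congr_deriv (by ring)
  have h3 : HasDerivAt (fun x : ℝ => c^2 * Real.sqrt (c^2 + x^2))
      (c^2 * (2*x / (2 * Real.sqrt (c^2 + x^2)))) x := h2.const_mul _
  have h4 := (hasDerivAt_id x).div h3 (by positivity)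
  convert h4 using 1 <;> try rfl
  rw [rpow_neg32 c _ hq]
  have hsq : Real.sqrt (c^2 + x^2) ^ 2 = c^2 + x^2 := Real.sq_sqrt hq.le
  simp only [id]
  field_simp
  linear_combination (-x^2) * hsq

lemma hasDerivAt_G (c K Ω a : ℝ) (hc : 0 < c) (hK : 0 < K) (b : ℝ) :
    HasDerivAt (fun b => Real.sqrt (c^2 + (a + K*b - Ω)^2) / (K * c^2))
      ((a + K*b - Ω) / (c^2 * Real.sqrt (c^2 + (a + K*b - Ω)^2))) b := by
  set u := a + K*b - Ω with hu
  have hq : 0 < c^2 + u^2 := by positivity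
  have hs : 0 < Real.sqrt (c^2 + u^2) := Real.sqrt_pos.2 hq
  have h1 : HasDerivAt (fun b : ℝ => c^2 + (a + K*b - Ω)^2) (2*u*K) b := by
    have hlin : HasDerivAt (fun b : ℝ => a + K*b - Ω) K b := by
      simpa using (((hasDerivAt_id b).const_mul K).const_add a).sub_const Ω
    simpa using ((hasDerivAt_pow 2 u).comp b hlin).const_add (c^2)
  have h2 : HasDerivAt (fun b : ℝ => Real.sqrt (c^2 + (a + K*b - Ω)^2))
      (2*u*K / (2 * Real.sqrt (c^2 + u^2))) b :=
    (Real.hasDerivAt_sqrt hq.ne').comp b h1 |>.congr_deriv (by ring)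
  have h3 := h2.div_const (K * c^2)
  convert h3 using 1 <;> try rfl
  field_simp

theorem stmt_7 (c K Ω a₁ a₂ b₁ b₂ : ℝ) (hc : 0 < c) (hK : 0 < K) :
    (∫ b in b₁..b₂, ∫ a in a₁..a₂,
        (c ^ 2 + (a + K * b - Ω) ^ 2) ^ (-(3 : ℝ) / 2))
      = (1 / (K * c ^ 2)) *
        (Real.sqrt (c ^ 2 + (a₂ + K * b₂ - Ω) ^ 2)
          - Real.sqrt (c ^ 2 + (a₁ + K * b₂ - Ω) ^ 2)
          - Real.sqrt (c ^ 2 + (a₂ + K * b₁ - Ω) ^ 2)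
          + Real.sqrt (c ^ 2 + (a₁ + K * b₁ - Ω) ^ 2)) := by
  -- inner integral
  have hinner : ∀ b : ℝ, (∫ a in a₁..a₂, (c ^ 2 + (a + K * b - Ω) ^ 2) ^ (-(3 : ℝ) / 2))
      = (a₂ + K*b - Ω) / (c^2 * Real.sqrt (c^2 + (a₂ + K*b - Ω)^2))
        - (a₁ + K*b - Ω) / (c^2 * Real.sqrt (c^2 + (a₁ + K*b - Ω)^2)) := by
    intro b
    have hder : ∀ a ∈ Set.uIcc a₁ a₂,
        HasDerivAt (fun a => (a + K*b - Ω) / (c^2 * Real.sqrt (c^2 + (a + K*b - Ω)^2)))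
          ((c ^ 2 + (a + K * b - Ω) ^ 2) ^ (-(3 : ℝ) / 2)) a := by
      intro a _
      have hlin : HasDerivAt (fun a : ℝ => a + K*b - Ω) 1 a := by
        simpa using ((hasDerivAt_id a).add_const (K*b)).sub_const Ω
      have h := (hasDerivAt_F c hc (a + K*b - Ω)).comp a hlin
      rw [mul_one] at h
      exact h
    have hcont : Continuous fun a : ℝ => (c ^ 2 + (a + K * b - Ω) ^ 2) ^ (-(3 : ℝ) / 2) := by
      apply Continuous.rpow_const (by continuity)
      intro a; left
      positivity
    exact intervalIntegral.integral_eq_sub_of_hasDerivAt hder (hcont.intervalIntegrable _ _)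
  rw [intervalIntegral.integral_congr (fun b _ => hinner b)]
  have hderG : ∀ b ∈ Set.uIcc b₁ b₂,
      HasDerivAt (fun b => Real.sqrt (c^2 + (a₂ + K*b - Ω)^2) / (K * c^2)
          - Real.sqrt (c^2 + (a₁ + K*b - Ω)^2) / (K * c^2))
        ((a₂ + K*b - Ω) / (c^2 * Real.sqrt (c^2 + (a₂ + K*b - Ω)^2))
          - (a₁ + K*b - Ω) / (c^2 * Real.sqrt (c^2 + (a₁ + K*b - Ω)^2))) b :=
    fun b _ => (hasDerivAt_G c K Ω a₂ hc hK b).sub (hasDerivAt_G c K Ω a₁ hc hK b)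
  have hcont2 : Continuous fun b : ℝ =>
      (a₂ + K*b - Ω) / (c^2 * Real.sqrt (c^2 + (a₂ + K*b - Ω)^2))
        - (a₁ + K*b - Ω) / (c^2 * Real.sqrt (c^2 + (a₁ + K*b - Ω)^2)) := by
    have : ∀ a : ℝ, Continuous fun b : ℝ =>
        (a + K*b - Ω) / (c^2 * Real.sqrt (c^2 + (a + K*b - Ω)^2)) := by
      intro a
      apply Continuous.div (by continuity) (by continuity)
      intro b
      have : 0 < Real.sqrt (c^2 + (a + K*b - Ω)^2) := Real.sqrt_pos.2 (by positivity)
      positivity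
    exact (this a₂).sub (this a₁)
  rw [intervalIntegral.integral_eq_sub_of_hasDerivAt hderG (hcont2.intervalIntegrable _ _)]
  field_simp
  ring
end

section
/- Let Ψ > 0, κ > 0, and let X₋, X₊, a₀, Ω be real numbers with a₀ > 0. Then, as t → +∞, the eight-term bracket [ F(X₋, κt + a₀ − Ω) − F(X₋, κt − a₀ − Ω) + F(X₋, κt + a₀ + Ω) − F(X₋, κt − a₀ + Ω) + F(X₊, κt + a₀ − Ω) − F(X₊, κt − a₀ − Ω) + F(X₊, κt + a₀ + Ω) − F(X₊, κt − a₀ + Ω) ] converges to (4a₀/Ψ)·[ arctan(X₋/Ψ) + arctan(X₊/Ψ) ]. -/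
open Real Filter

/-- `F(x, y) := arcsinh(x/√(Ψ² + y²)) + (y/Ψ)·arctan(x·y/(Ψ·√(Ψ² + x² + y²)))`. -/
noncomputable def F (Ψ x y : ℝ) : ℝ :=
  Real.arsinh (x / Real.sqrt (Ψ ^ 2 + y ^ 2)) +
    (y / Ψ) * Real.arctan (x * y / (Ψ * Real.sqrt (Ψ ^ 2 + x ^ 2 + y ^ 2)))

lemma arctan_lipschitz : LipschitzWith 1 Real.arctan := by
  apply lipschitzWith_of_nnnorm_deriv_le Real.differentiable_arctan
  intro x
  rw [Real.deriv_arctan]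
  rw [← NNReal.coe_le_coe]
  simp only [coe_nnnorm, Real.norm_eq_abs, NNReal.coe_one]
  rw [abs_of_nonneg (by positivity)]
  rw [div_le_one (by positivity)]
  nlinarith [sq_nonneg x]

lemma sqrt_tendsto_atTop : Tendsto Real.sqrt atTop atTop := by
  apply tendsto_atTop_atTop.2
  intro b
  refine ⟨max 0 b ^ 2, fun a ha => ?_⟩
  calc b ≤ max 0 b := le_max_right _ _
    _ = Real.sqrt (max 0 b ^ 2) := (Real.sqrt_sq (le_max_left _ _)).symm
    _ ≤ Real.sqrt a := Real.sqrt_le_sqrt ha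

/-- Key: `y * (arctan(x y/(Ψ √(Ψ²+x²+y²))) - arctan(x/Ψ)) → 0`. -/
lemma key_delta (Ψ x : ℝ) (hΨ : 0 < Ψ) :
    Tendsto (fun y : ℝ =>
      y * (Real.arctan (x * y / (Ψ * Real.sqrt (Ψ ^ 2 + x ^ 2 + y ^ 2))) -
        Real.arctan (x / Ψ))) atTop (nhds 0) := by
  have hg : Tendsto (fun y : ℝ => |x| / Ψ * (Ψ ^ 2 + x ^ 2) / y) atTop (nhds 0) :=
    Tendsto.div_atTop tendsto_const_nhds tendsto_id
  refine squeeze_zero_norm' ?_ hg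
  filter_upwards [eventually_gt_atTop 0] with y hy
  set s := Ψ ^ 2 + x ^ 2 + y ^ 2 with hs
  have hspos : 0 < s := by positivity
  have hsq : 0 < Real.sqrt s := Real.sqrt_pos.2 hspos
  have hy2 : y ≤ Real.sqrt s := by
    rw [← Real.sqrt_sq hy.le]
    exact Real.sqrt_le_sqrt (by nlinarith)
  have hdiff : |x * y / (Ψ * Real.sqrt s) - x / Ψ| ≤ |x| / Ψ * (Ψ ^ 2 + x ^ 2) / y ^ 2 := by
    have h1 : x * y / (Ψ * Real.sqrt s) - x / Ψ = (x / Ψ) * (y / Real.sqrt s - 1) := by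
      field_simp
    rw [h1, abs_mul]
    have h2 : |y / Real.sqrt s - 1| = 1 - y / Real.sqrt s := by
      rw [abs_of_nonpos (by rw [sub_nonpos, div_le_one hsq]; exact hy2)]
      ring
    rw [h2, abs_div, abs_of_pos hΨ]
    have h3 : 1 - y / Real.sqrt s = (Ψ ^ 2 + x ^ 2) / (Real.sqrt s * (Real.sqrt s + y)) := by
      have := Real.sq_sqrt hspos.le
      field_simp
      nlinarith [Real.sq_sqrt hspos.le]
    rw [h3]
    have h4 : (Ψ ^ 2 + x ^ 2) / (Real.sqrt s * (Real.sqrt s + y)) ≤ (Ψ ^ 2 + x ^ 2) / y ^ 2 := by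
      apply div_le_div_of_nonneg_left (by positivity) (by positivity)
      nlinarith
    calc |x| / Ψ * ((Ψ ^ 2 + x ^ 2) / (Real.sqrt s * (Real.sqrt s + y)))
        ≤ |x| / Ψ * ((Ψ ^ 2 + x ^ 2) / y ^ 2) := by
          apply mul_le_mul_of_nonneg_left h4 (by positivity)
      _ = |x| / Ψ * (Ψ ^ 2 + x ^ 2) / y ^ 2 := by ring
  have harc : |Real.arctan (x * y / (Ψ * Real.sqrt s)) - Real.arctan (x / Ψ)| ≤
      |x * y / (Ψ * Real.sqrt s) - x / Ψ| := by
    have := arctan_lipschitz.dist_le_mul (x * y / (Ψ * Real.sqrt s)) (x / Ψ)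
    simpa [Real.dist_eq] using this
  rw [Real.norm_eq_abs, abs_mul, abs_of_pos hy]
  calc y * |Real.arctan (x * y / (Ψ * Real.sqrt s)) - Real.arctan (x / Ψ)|
      ≤ y * (|x| / Ψ * (Ψ ^ 2 + x ^ 2) / y ^ 2) := by
        apply mul_le_mul_of_nonneg_left (le_trans harc hdiff) hy.le
    _ = |x| / Ψ * (Ψ ^ 2 + x ^ 2) / y := by field_simp

lemma arsinh_part (Ψ x : ℝ) (hΨ : 0 < Ψ) :
    Tendsto (fun y : ℝ => Real.arsinh (x / Real.sqrt (Ψ ^ 2 + y ^ 2))) atTop (nhds 0) := by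
  have h1 : Tendsto (fun y : ℝ => Real.sqrt (Ψ ^ 2 + y ^ 2)) atTop atTop := by
    apply sqrt_tendsto_atTop.comp
    apply tendsto_atTop_add_const_left
    exact tendsto_pow_atTop two_ne_zero
  have h2 : Tendsto (fun y : ℝ => x / Real.sqrt (Ψ ^ 2 + y ^ 2)) atTop (nhds 0) :=
    Tendsto.div_atTop tendsto_const_nhds h1
  have := (Real.continuous_arsinh.tendsto 0).comp h2
  simpa [Function.comp_def, Real.arsinh_zero] using this

/-- The pair limit: F(x, y+a) - F(x, y-a)  →  (2a/Ψ) arctan(x/Ψ). -/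
lemma pair_limit (Ψ x a : ℝ) (hΨ : 0 < Ψ) :
    Tendsto (fun y : ℝ => F Ψ x (y + a) - F Ψ x (y - a)) atTop
      (nhds ((2 * a / Ψ) * Real.arctan (x / Ψ))) := by
  have hshift : ∀ c : ℝ, Tendsto (fun y : ℝ => y + c) atTop atTop := fun c =>
    tendsto_atTop_add_const_right _ c tendsto_id
  -- arsinh parts
  have hA₁ := (arsinh_part Ψ x hΨ).comp (hshift a)
  have hA₂ := (arsinh_part Ψ x hΨ).comp (hshift (-a))
  -- delta parts : (y±a) * Δ(y±a) → 0
  have hD₁ := (key_delta Ψ x hΨ).comp (hshift a)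
  have hD₂ := (key_delta Ψ x hΨ).comp (hshift (-a))
  have key : Tendsto (fun y : ℝ =>
      (Real.arsinh (x / Real.sqrt (Ψ ^ 2 + (y + a) ^ 2)) -
        Real.arsinh (x / Real.sqrt (Ψ ^ 2 + (y - a) ^ 2))) +
      ((1 / Ψ) * ((y + a) * (Real.arctan (x * (y + a) / (Ψ * Real.sqrt (Ψ ^ 2 + x ^ 2 + (y + a) ^ 2))) - Real.arctan (x / Ψ)))
        - (1 / Ψ) * ((y - a) * (Real.arctan (x * (y - a) / (Ψ * Real.sqrt (Ψ ^ 2 + x ^ 2 + (y - a) ^ 2))) - Real.arctan (x / Ψ)))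
        + (2 * a / Ψ) * Real.arctan (x / Ψ)))
      atTop (nhds (((0 : ℝ) - 0) + ((1 / Ψ) * 0 - (1 / Ψ) * 0 + (2 * a / Ψ) * Real.arctan (x / Ψ)))) := by
    refine Tendsto.add (hA₁.sub hA₂) (Tendsto.add (Tendsto.sub ?_ ?_) tendsto_const_nhds)
    · simpa [Function.comp] using hD₁.const_mul (1 / Ψ)
    · simpa [Function.comp, sub_eq_add_neg] using hD₂.const_mul (1 / Ψ)
  have keyval : ((0 : ℝ) - 0) + ((1 / Ψ) * 0 - (1 / Ψ) * 0 + (2 * a / Ψ) * Real.arctan (x / Ψ))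
      = (2 * a / Ψ) * Real.arctan (x / Ψ) := by ring
  rw [keyval] at key
  convert key using 2 with y
  simp only [F]
  field_simp
  ring

theorem stmt_10 (Ψ κ Xm Xp a₀ Ω : ℝ) (hΨ : 0 < Ψ) (hκ : 0 < κ) (ha₀ : 0 < a₀) :
    Filter.Tendsto
      (fun t : ℝ =>
        F Ψ Xm (κ * t + a₀ - Ω) - F Ψ Xm (κ * t - a₀ - Ω)
          + F Ψ Xm (κ * t + a₀ + Ω) - F Ψ Xm (κ * t - a₀ + Ω)
          + F Ψ Xp (κ * t + a₀ - Ω) - F Ψ Xp (κ * t - a₀ - Ω)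
          + F Ψ Xp (κ * t + a₀ + Ω) - F Ψ Xp (κ * t - a₀ + Ω))
      Filter.atTop
      (nhds ((4 * a₀ / Ψ) * (Real.arctan (Xm / Ψ) + Real.arctan (Xp / Ψ)))) := by
  have hbase : Tendsto (fun t : ℝ => κ * t) atTop atTop :=
    Tendsto.const_mul_atTop hκ tendsto_id
  have h1 : Tendsto (fun t : ℝ => κ * t - Ω) atTop atTop :=
    tendsto_atTop_add_const_right _ (-Ω) hbase |>.congr (by intro t; ring_nf)
  have h2 : Tendsto (fun t : ℝ => κ * t + Ω) atTop atTop :=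
    tendsto_atTop_add_const_right _ Ω hbase
  have p1 : Tendsto (fun t : ℝ => F Ψ Xm (κ * t + a₀ - Ω) - F Ψ Xm (κ * t - a₀ - Ω)) atTop
      (nhds ((2 * a₀ / Ψ) * Real.arctan (Xm / Ψ))) := by
    have := (pair_limit Ψ Xm a₀ hΨ).comp h1
    apply this.congr
    intro t; simp [Function.comp]; ring_nf
  have p2 : Tendsto (fun t : ℝ => F Ψ Xm (κ * t + a₀ + Ω) - F Ψ Xm (κ * t - a₀ + Ω)) atTop
      (nhds ((2 * a₀ / Ψ) * Real.arctan (Xm / Ψ))) := by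
    have := (pair_limit Ψ Xm a₀ hΨ).comp h2
    apply this.congr
    intro t; simp [Function.comp]; ring_nf
  have p3 : Tendsto (fun t : ℝ => F Ψ Xp (κ * t + a₀ - Ω) - F Ψ Xp (κ * t - a₀ - Ω)) atTop
      (nhds ((2 * a₀ / Ψ) * Real.arctan (Xp / Ψ))) := by
    have := (pair_limit Ψ Xp a₀ hΨ).comp h1
    apply this.congr
    intro t; simp [Function.comp]; ring_nf
  have p4 : Tendsto (fun t : ℝ => F Ψ Xp (κ * t + a₀ + Ω) - F Ψ Xp (κ * t - a₀ + Ω)) atTop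
      (nhds ((2 * a₀ / Ψ) * Real.arctan (Xp / Ψ))) := by
    have := (pair_limit Ψ Xp a₀ hΨ).comp h2
    apply this.congr
    intro t; simp [Function.comp]; ring_nf
  have total := ((p1.add p2).add p3).add p4
  have heq : (2 * a₀ / Ψ) * Real.arctan (Xm / Ψ) + (2 * a₀ / Ψ) * Real.arctan (Xm / Ψ)
      + (2 * a₀ / Ψ) * Real.arctan (Xp / Ψ) + (2 * a₀ / Ψ) * Real.arctan (Xp / Ψ)
      = (4 * a₀ / Ψ) * (Real.arctan (Xm / Ψ) + Real.arctan (Xp / Ψ)) := by ring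
  rw [heq] at total
  apply total.congr
  intro t; ring
end
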